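/- Let n ≥ 1 be an integer, σ ≥ 1, μ ≥ 1/2 and M > 0 real numbers with M·μ ≤ σ, let d ∈ ℂ, and let λ : ℕ → ℝ satisfy |λ(j)| ≤ ρ·(j+1)^{M/(2n)} for all j ∈ ℕ, for some ρ > 0. Then the following two conditions are equivalent: (i) for every ε > 0 there exists C > 0 such that |τ + d·λ(j)| ≥ C·exp(−ε(|τ|^{1/σ} + j^{1/(2nμ)})) for all (τ,j) ∈ ℤ × ℕ; (ii) for every ε > 0 there exists C > 0 such that |τ + d·λ(j)| ≥ C·exp(−ε·j^{1/(2nμ)}) for all (τ,j) ∈ ℤ × ℕ (equivalently, inf_{τ∈ℤ} |τ + d·λ(j)| ≥ C·exp(−ε·j^{1/(2nμ)}) for all j). -/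

import Mathlib

open Real

lemma aux_rpow_add_le (a b p : ℝ) (ha : 0 ≤ a) (hb : 0 ≤ b) (hp : 0 ≤ p) (hp1 : p ≤ 1) :
    (a + b) ^ p ≤ a ^ p + b ^ p := by
  lift a to NNReal using ha
  lift b to NNReal using hb
  exact_mod_cast NNReal.rpow_add_le_add_rpow a b hp hp1


/-- for the single operator `𝓛 = D_t + d P(x,D_x)` with symbol
`τ + d λ_j`, the two-parameter Diophantine lower bound is equivalent to the
one-parameter bound on `inf_{τ∈ℤ} |τ + d λ_j|`. -/
theorem statement16 (n : ℕ) (hn : 1 ≤ n) (σ μ M ρ : ℝ)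
    (hσ : 1 ≤ σ) (hμ : 1 / 2 ≤ μ) (hMpos : 0 < M) (hMμ : M * μ ≤ σ)
    (d : ℂ) (lam : ℕ → ℝ) (hρ : 0 < ρ)
    (hlam : ∀ j : ℕ, |lam j| ≤ ρ * ((j : ℝ) + 1) ^ (M / (2 * n))) :
    (∀ ε > 0, ∃ C > 0, ∀ (τ : ℤ) (j : ℕ),
        ‖(τ : ℂ) + d * (lam j : ℂ)‖ ≥
          C * Real.exp (-ε * ((|τ| : ℝ) ^ (1 / σ) + (j : ℝ) ^ (1 / (2 * n * μ))))) ↔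
    (∀ ε > 0, ∃ C > 0, ∀ (τ : ℤ) (j : ℕ),
        ‖(τ : ℂ) + d * (lam j : ℂ)‖ ≥
          C * Real.exp (-ε * (j : ℝ) ^ (1 / (2 * n * μ)))) := by
  have hn1 : (1 : ℝ) ≤ (n : ℝ) := by exact_mod_cast hn
  have hμ0 : 0 < μ := lt_of_lt_of_le (by norm_num) hμ
  have hσ0 : 0 < σ := lt_of_lt_of_le one_pos hσ
  set β : ℝ := 1 / (2 * n * μ) with hβ
  have h2nμ : (1 : ℝ) ≤ 2 * n * μ := by nlinarith
  have hβpos : 0 < β := by positivity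
  have hβ1 : β ≤ 1 := by
    rw [hβ]; rw [div_le_one (by positivity)]; linarith
  clear_value β
  constructor
  · -- hard direction
    intro h ε hε
    set K : ℝ := (‖d‖ * ρ) ^ (1 / σ) + 1 with hKdef
    clear_value K
    have hK1 : 1 ≤ K := by
      have h0 : 0 ≤ (‖d‖ * ρ) ^ (1 / σ) :=
        Real.rpow_nonneg (by positivity) _
      rw [hKdef]; linarith
    have hK0 : 0 < K := lt_of_lt_of_le one_pos hK1
    obtain ⟨C, hC, hbound⟩ := h (ε / K) (by positivity)
    refine ⟨min (1 / 2) (C * Real.exp (-ε)), by positivity, ?_⟩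
    intro τ j
    have hjβ0 : 0 ≤ (j : ℝ) ^ β := Real.rpow_nonneg (Nat.cast_nonneg j) _
    have hexp1 : Real.exp (-ε * (j : ℝ) ^ β) ≤ 1 := by
      apply Real.exp_le_one_iff.mpr; nlinarith
    by_cases hcase : ‖d‖ * |lam j| + 1 / 2 ≤ |(τ : ℝ)|
    · -- large τ : modulus ≥ 1/2
      have htri : |(τ : ℝ)| - ‖d‖ * |lam j| ≤
          ‖(τ : ℂ) + d * (lam j : ℂ)‖ := by
        have h1 := norm_add_le ((τ : ℂ) + d * (lam j : ℂ)) (-(d * (lam j : ℂ)))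
        simp only [add_neg_cancel_right, norm_neg] at h1
        have h2 : ‖(τ : ℂ)‖ = |(τ : ℝ)| := by
          rw [show ((τ : ℂ)) = (((τ : ℝ)) : ℂ) by push_cast; rfl, Complex.norm_real, Real.norm_eq_abs]
        have h3 : ‖d * (lam j : ℂ)‖ = ‖d‖ * |lam j| := by
          rw [norm_mul, Complex.norm_real, Real.norm_eq_abs]
        rw [h2, h3] at h1
        linarith
      have h12 : (1 : ℝ) / 2 ≤ ‖(τ : ℂ) + d * (lam j : ℂ)‖ := by
        linarith
      calc min (1 / 2) (C * Real.exp (-ε)) * Real.exp (-ε * (j : ℝ) ^ β)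
          ≤ (1 / 2) * 1 := by
            apply mul_le_mul (min_le_left _ _) hexp1 (Real.exp_nonneg _) (by norm_num)
        _ ≤ ‖(τ : ℂ) + d * (lam j : ℂ)‖ := by linarith
    · -- small τ
      push_neg at hcase
      have hτ : |(τ : ℝ)| ≤ ‖d‖ * ρ * ((j : ℝ) + 1) ^ (M / (2 * n)) + 1 / 2 := by
        have := hlam j
        nlinarith [norm_nonneg d, mul_le_mul_of_nonneg_left this (norm_nonneg d)]
      have h1σ0 : 0 < 1 / σ := by positivity
      have h1σ1 : 1 / σ ≤ 1 := by
        rw [div_le_one hσ0]; linarith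
      -- |τ|^{1/σ} ≤ (K-1)(j+1)^{M/(2nσ)} + 1
      have step1 : |(τ : ℝ)| ^ (1 / σ) ≤
          (‖d‖ * ρ) ^ (1 / σ) * ((j : ℝ) + 1) ^ (M / (2 * n) * (1 / σ)) + 1 := by
        have h1 : |(τ : ℝ)| ^ (1 / σ) ≤
            (‖d‖ * ρ * ((j : ℝ) + 1) ^ (M / (2 * n)) + 1 / 2) ^ (1 / σ) :=
          Real.rpow_le_rpow (abs_nonneg _) hτ h1σ0.le
        have h2 : (‖d‖ * ρ * ((j : ℝ) + 1) ^ (M / (2 * n)) + 1 / 2) ^ (1 / σ) ≤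
            (‖d‖ * ρ * ((j : ℝ) + 1) ^ (M / (2 * n))) ^ (1 / σ) +
              (1 / 2 : ℝ) ^ (1 / σ) :=
          aux_rpow_add_le _ _ _ (by positivity) (by norm_num) h1σ0.le h1σ1
        have h3 : (‖d‖ * ρ * ((j : ℝ) + 1) ^ (M / (2 * n))) ^ (1 / σ) =
            (‖d‖ * ρ) ^ (1 / σ) * ((j : ℝ) + 1) ^ (M / (2 * n) * (1 / σ)) := by
          rw [Real.mul_rpow (by positivity) (Real.rpow_nonneg (by positivity) _),
            ← Real.rpow_mul (by positivity)]
        have h4 : (1 / 2 : ℝ) ^ (1 / σ) ≤ 1 :=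
          Real.rpow_le_one (by norm_num) (by norm_num) h1σ0.le
        calc |(τ : ℝ)| ^ (1 / σ) ≤ _ := h1
          _ ≤ _ := h2
          _ ≤ _ := by rw [h3]; linarith
      -- exponent comparison
      have hexpo : M / (2 * n) * (1 / σ) ≤ β := by
        rw [hβ]
        rw [div_mul_div_comm, mul_one, div_le_div_iff₀ (by positivity) (by positivity)]
        nlinarith
      have hj1 : (1 : ℝ) ≤ (j : ℝ) + 1 := by
        have : (0 : ℝ) ≤ (j : ℝ) := Nat.cast_nonneg j
        linarith
      have step2 : ((j : ℝ) + 1) ^ (M / (2 * n) * (1 / σ)) ≤ ((j : ℝ) + 1) ^ β :=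
        Real.rpow_le_rpow_of_exponent_le hj1 hexpo
      have step3 : ((j : ℝ) + 1) ^ β ≤ (j : ℝ) ^ β + 1 := by
        have := aux_rpow_add_le (j : ℝ) 1 β (Nat.cast_nonneg j) zero_le_one hβpos.le hβ1
        simpa using this
      -- combine: |τ|^{1/σ} + j^β ≤ K * j^β + K  (since K = c+1)
      have hc0 : 0 ≤ (‖d‖ * ρ) ^ (1 / σ) := Real.rpow_nonneg (by positivity) _
      have hsum : |(τ : ℝ)| ^ (1 / σ) + (j : ℝ) ^ β ≤ K * ((j : ℝ) ^ β + 1) := by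
        have h5 : (‖d‖ * ρ) ^ (1 / σ) * ((j : ℝ) + 1) ^ (M / (2 * n) * (1 / σ)) ≤
            (‖d‖ * ρ) ^ (1 / σ) * ((j : ℝ) ^ β + 1) := by
          apply mul_le_mul_of_nonneg_left (le_trans step2 step3) hc0
        rw [hKdef]
        nlinarith
      have hexpineq : C * Real.exp (-ε) * Real.exp (-ε * (j : ℝ) ^ β) ≤
          C * Real.exp (-(ε / K) * (|(τ : ℝ)| ^ (1 / σ) + (j : ℝ) ^ β)) := by
        rw [mul_assoc, ← Real.exp_add]
        apply mul_le_mul_of_nonneg_left _ hC.le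
        apply Real.exp_le_exp.mpr
        have : ε / K * (|(τ : ℝ)| ^ (1 / σ) + (j : ℝ) ^ β) ≤ ε / K * (K * ((j : ℝ) ^ β + 1)) :=
          mul_le_mul_of_nonneg_left hsum (by positivity)
        have hKK : ε / K * (K * ((j : ℝ) ^ β + 1)) = ε * (j : ℝ) ^ β + ε := by
          field_simp
        rw [hKK] at this
        linarith
      have hb := hbound τ j
      calc min (1 / 2) (C * Real.exp (-ε)) * Real.exp (-ε * (j : ℝ) ^ β)
          ≤ C * Real.exp (-ε) * Real.exp (-ε * (j : ℝ) ^ β) := by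
            apply mul_le_mul_of_nonneg_right (min_le_right _ _) (Real.exp_nonneg _)
        _ ≤ C * Real.exp (-(ε / K) * (|(τ : ℝ)| ^ (1 / σ) + (j : ℝ) ^ β)) := hexpineq
        _ ≤ ‖(τ : ℂ) + d * (lam j : ℂ)‖ := hb
  · -- easy direction
    intro h ε hε
    obtain ⟨C, hC, hbound⟩ := h ε hε
    refine ⟨C, hC, ?_⟩
    intro τ j
    refine le_trans ?_ (hbound τ j)
    apply mul_le_mul_of_nonneg_left _ hC.le
    apply Real.exp_le_exp.mpr
    have h0 : 0 ≤ (|(τ : ℝ)|) ^ (1 / σ) := Real.rpow_nonneg (abs_nonneg _) _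
    linarith [mul_nonneg hε.le h0]
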